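/- Let X be a connected locally finite graph, let R > 0, and let Y ⊆ X be a (2R+1)-separated, 2R-coarsely dense subset. Define a graph structure E_Y on Y by: y E_Y y' iff 0 < d_X(y,y') ≤ 4R+1. Then (Y, E_Y) is a connected graph, and each y ∈ Y has degree at most |D_X(y, 4R+1)| − 1 in (Y, E_Y). -/

import Mathlib

open SimpleGraph

private lemma walk_split {V : Type*} {G : SimpleGraph V} (hconn : G.Connected) :
    ∀ {u v : V} (p : G.Walk u v) (k : ℕ),
      G.dist u (p.getVert k) ≤ k ∧ G.dist (p.getVert k) v ≤ p.length - k := by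
  intro u v p
  induction p with
  | nil =>
    intro k
    rw [SimpleGraph.Walk.getVert_of_length_le _ (by simp)]; exact ⟨by simp [SimpleGraph.dist_self], by simp [SimpleGraph.dist_self]⟩
  | @cons u w v h q ih =>
    intro k
    cases k with
    | zero =>
      refine ⟨by simp, ?_⟩
      simpa using SimpleGraph.dist_le (SimpleGraph.Walk.cons h q)
    | succ k =>
      rw [SimpleGraph.Walk.getVert_cons_succ]
      constructor
      · calc G.dist u (q.getVert k) ≤ G.dist u w + G.dist w (q.getVert k) :=
              hconn.dist_triangle
          _ ≤ 1 + k := by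
              have h1 : G.dist u w ≤ 1 := by
                simpa using SimpleGraph.dist_le (SimpleGraph.Walk.cons h SimpleGraph.Walk.nil)
              exact Nat.add_le_add h1 (ih k).1
          _ = k + 1 := by omega
      · simpa [SimpleGraph.Walk.length_cons, Nat.succ_sub_succ] using (ih k).2

private lemma ball_finite {V : Type*} {G : SimpleGraph V} (hconn : G.Connected)
    (hlf : G.LocallyFinite) (y : V) : ∀ n : ℕ, {z : V | G.dist y z ≤ n}.Finite := by
  intro n
  induction n with
  | zero =>
    refine Set.Finite.subset (Set.finite_singleton y) ?_
    intro z hz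
    simp only [Set.mem_setOf_eq, Nat.le_zero] at hz
    simp [(hconn.dist_eq_zero_iff.mp hz).symm]
  | succ n ih =>
    refine Set.Finite.subset (ih.union (ih.biUnion fun w _ => (G.neighborSet w).toFinite)) ?_
    intro z hz
    simp only [Set.mem_setOf_eq] at hz
    by_cases hzn : G.dist y z ≤ n
    · exact Or.inl hzn
    · have hd : G.dist y z = n + 1 := by omega
      obtain ⟨p, hp⟩ := (hconn y z).exists_walk_length_eq_dist
      rw [hd] at hp
      refine Or.inr ?_
      refine Set.mem_biUnion (show p.getVert n ∈ {z : V | G.dist y z ≤ n} from ?_) ?_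
      · have := (walk_split hconn p n).1
        simpa using this
      · have hadj : G.Adj (p.getVert n) (p.getVert (n + 1)) :=
          SimpleGraph.Walk.adj_getVert_succ p (by omega)
        have : p.getVert (n + 1) = z := by
          rw [← hp]; exact p.getVert_length
        rw [this] at hadj
        exact hadj

/-- If `Y` is a `(2R+1)`-separated, `2R`-coarsely dense subset of a connected locally
finite graph `X`, then the graph on `Y` with `y ~ y'` iff `0 < d(y,y') ≤ 4R+1` is
connected, and each vertex `y` has degree at most `|D_X(y,4R+1)| - 1`. -/
theorem stmt_5 {V : Type*} (G : SimpleGraph V) (hconn : G.Connected)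
    (hlf : G.LocallyFinite) (R : ℕ) (hR : 0 < R) (Y : Set V)
    (hsep : ∀ y ∈ Y, ∀ y' ∈ Y, y ≠ y' → 2 * R + 1 ≤ G.dist y y')
    (hdense : ∀ x : V, ∃ y ∈ Y, G.dist x y ≤ 2 * R)
    (GY : SimpleGraph Y)
    (hGY : ∀ y y' : Y, GY.Adj y y' ↔ 0 < G.dist y y' ∧ G.dist y y' ≤ 4 * R + 1) :
    GY.Connected ∧ ∀ y : Y, (GY.neighborSet y).ncard ≤
      {z : V | G.dist (y : V) z ≤ 4 * R + 1}.ncard - 1 := by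
  constructor
  · -- connectivity
    have hne : Nonempty Y := by
      obtain ⟨x⟩ := hconn.nonempty
      obtain ⟨y, hy, -⟩ := hdense x
      exact ⟨⟨y, hy⟩⟩
    have key : ∀ n : ℕ, ∀ a b : Y, G.dist (a : V) (b : V) ≤ n → GY.Reachable a b := by
      intro n
      induction n using Nat.strong_induction_on with
      | _ n ih =>
        intro a b hd
        by_cases hab : a = b
        · subst hab; exact SimpleGraph.Reachable.refl a
        · have hvne : (a : V) ≠ (b : V) := Subtype.coe_injective.ne hab
          have hpos : 0 < G.dist (a : V) (b : V) := hconn.pos_dist_of_ne hvne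
          by_cases hle : G.dist (a : V) (b : V) ≤ 4 * R + 1
          · exact ((hGY a b).mpr ⟨hpos, hle⟩).reachable
          · push_neg at hle
            obtain ⟨p, hp⟩ := (hconn (a : V) (b : V)).exists_walk_length_eq_dist
            set x := p.getVert (2 * R + 1) with hx
            have h1 : G.dist (a : V) x ≤ 2 * R + 1 := (walk_split hconn p (2 * R + 1)).1
            have h2 : G.dist x (b : V) ≤ G.dist (a : V) (b : V) - (2 * R + 1) := by
              have := (walk_split hconn p (2 * R + 1)).2
              rwa [hp] at this
            have htri : G.dist (a : V) (b : V) ≤ G.dist (a : V) x + G.dist x (b : V) :=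
              hconn.dist_triangle
            obtain ⟨c, hcY, hc⟩ := hdense x
            set c' : Y := ⟨c, hcY⟩ with hc'
            have hcx : G.dist c x ≤ 2 * R := by rwa [G.dist_comm]
            have hac : G.dist (a : V) c ≤ 4 * R + 1 := by
              have := hconn.dist_triangle (u := (a : V)) (v := x) (w := c)
              omega
            have hacpos : 0 < G.dist (a : V) c := by
              have := hconn.dist_triangle (u := (a : V)) (v := c) (w := x)
              omega
            have hcb : G.dist c (b : V) ≤ G.dist (a : V) (b : V) - 1 := by
              have := hconn.dist_triangle (u := c) (v := x) (w := (b : V))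
              omega
            have r1 : GY.Adj a c' := (hGY a c').mpr ⟨hacpos, hac⟩
            have r2 : GY.Reachable c' b :=
              ih (G.dist (a : V) (b : V) - 1) (by omega) c' b hcb
            exact r1.reachable.trans r2
    exact (SimpleGraph.connected_iff GY).mpr ⟨fun a b => key (G.dist (a : V) (b : V)) a b le_rfl, hne⟩
  · -- degree bound
    intro y
    set B := {z : V | G.dist (y : V) z ≤ 4 * R + 1} with hB
    have hBfin : B.Finite := ball_finite hconn hlf (y : V) (4 * R + 1)
    have hsub : (Subtype.val '' (GY.neighborSet y : Set Y)) ⊆ B \ {(y : V)} := by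
      rintro _ ⟨z, hz, rfl⟩
      obtain ⟨hzpos, hzle⟩ := (hGY y z).mp hz
      refine ⟨hzle, ?_⟩
      simp only [Set.mem_singleton_iff]
      intro h
      rw [h, SimpleGraph.dist_self] at hzpos
      exact Nat.lt_irrefl 0 hzpos
    calc (GY.neighborSet y).ncard
        = (Subtype.val '' (GY.neighborSet y : Set Y)).ncard :=
          (Set.ncard_image_of_injective _ Subtype.val_injective).symm
      _ ≤ (B \ {(y : V)}).ncard := Set.ncard_le_ncard hsub hBfin.diff
      _ = B.ncard - 1 := by
          rw [Set.ncard_diff_singleton_of_mem (by simp [hB, SimpleGraph.dist_self])]
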